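/- arXiv:1307.3062 — 5 statements merged into one kernel-verified Lean document; each statement's English description precedes it below -/
import Mathlib

section
/- For n ≥ 0, T_n^{(r,k)}(x|λ) = Σ_{m=0}^{n} 1/(m+1)^k · Σ_{j=0}^{m} (-1)^j C(m,j) H_n^{(r)}(x-j|λ). -/
open PowerSeries Finset

/-- e^{xt} as a formal power series. -/
noncomputable def expX (x : ℂ) : PowerSeries ℂ := rescale x (exp ℂ)

/-- 1 - e^{-t} as a formal power series. -/
noncomputable def oneSubExpNeg : PowerSeries ℂ := 1 - rescale (-1) (exp ℂ)

/-- Li_k(1-e^{-t}) = Σ_{m≥1} (1-e^{-t})^m / m^k as a formal power series. -/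
noncomputable def polyLogC (k : ℤ) : PowerSeries ℂ :=
  mk fun n => ∑ m ∈ Finset.Icc 1 n, (coeff n (oneSubExpNeg ^ m)) * ((m : ℂ) ^ k)⁻¹

/-- integer power of a power series (inverse via `PowerSeries.inv`). -/
noncomputable def zpowS (f : PowerSeries ℂ) (r : ℤ) : PowerSeries ℂ :=
  f ^ r.toNat * (f⁻¹) ^ (-r).toNat

/-- (1-λ)/(e^t-λ). -/
noncomputable def feBase (l : ℂ) : PowerSeries ℂ :=
  C (1 - l) * (exp ℂ - C l)⁻¹

/-- exponential generating function Σ f(n) t^n/n!. -/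
noncomputable def GF (f : ℕ → ℂ) : PowerSeries ℂ := mk fun n => f n / n.factorial

/-- Stirling numbers of the second kind: (e^t-1)^m = m! Σ_l S2(l,m) t^l/l!. -/
noncomputable def S2 (n m : ℕ) : ℂ :=
  (n.factorial : ℂ) / (m.factorial : ℂ) * coeff n ((exp ℂ - 1) ^ m)

lemma osen_const : constantCoeff oneSubExpNeg = 0 := by
  rw [oneSubExpNeg, map_sub, map_one, ← coeff_zero_eq_constantCoeff_apply, coeff_rescale,
    coeff_zero_eq_constantCoeff_apply, constantCoeff_exp]
  simp

lemma osen_ne : oneSubExpNeg ≠ 0 := by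
  intro h
  have h1 : coeff 1 oneSubExpNeg = 1 := by
    simp [oneSubExpNeg, coeff_rescale, coeff_exp, coeff_one]
  rw [h] at h1; simp at h1

lemma coeff_mul_osen_pow (f : PowerSeries ℂ) {m j : ℕ} (h : j < m) :
    coeff j (f * oneSubExpNeg ^ m) = 0 := by
  have hx : (X : PowerSeries ℂ) ∣ oneSubExpNeg := X_dvd_iff.2 osen_const
  have hd : (X : PowerSeries ℂ) ^ m ∣ f * oneSubExpNeg ^ m :=
    (pow_dvd_pow_of_dvd hx m).mul_left f
  exact X_pow_dvd_iff.1 hd j h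

lemma coeff_osen_pow {m j : ℕ} (h : j < m) : coeff j (oneSubExpNeg ^ m) = 0 := by
  simpa using coeff_mul_osen_pow 1 h

lemma rescale_neg_pow (j : ℕ) :
    (rescale (-1 : ℂ) (exp ℂ)) ^ j = rescale (-(j : ℂ)) (exp ℂ) := by
  induction j with
  | zero => simp [rescale_zero]
  | succ j ih => rw [pow_succ, ih, exp_mul_exp_eq_exp_add]; push_cast; ring_nf

lemma osen_pow_eq (m : ℕ) : oneSubExpNeg ^ m =
    ∑ j ∈ range (m + 1), C ((-1) ^ j * (m.choose j : ℂ)) * rescale (-(j : ℂ)) (exp ℂ) := by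
  rw [oneSubExpNeg, sub_eq_neg_add, add_pow]
  refine sum_congr rfl fun j _ => ?_
  rw [neg_pow, rescale_neg_pow]
  have hC : C ((-1) ^ j * (m.choose j : ℂ))
      = (-1 : PowerSeries ℂ) ^ j * (m.choose j : PowerSeries ℂ) := by
    simp [map_mul, map_pow]
  rw [hC]; ring

lemma mulkey (Z : PowerSeries ℂ) (x : ℂ) (m : ℕ) :
    Z * expX x * oneSubExpNeg ^ m
      = ∑ j ∈ range (m + 1),
          C ((-1) ^ j * (m.choose j : ℂ)) * (Z * expX (x - (j : ℂ))) := by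
  rw [osen_pow_eq, mul_sum]
  refine sum_congr rfl fun j _ => ?_
  have hre : expX x * rescale (-(j : ℂ)) (exp ℂ) = expX (x - (j : ℂ)) := by
    rw [expX, expX, exp_mul_exp_eq_exp_add]; ring_nf
  calc Z * expX x * (C ((-1) ^ j * (m.choose j : ℂ)) * rescale (-(j : ℂ)) (exp ℂ))
      = C ((-1) ^ j * (m.choose j : ℂ)) * (Z * (expX x * rescale (-(j : ℂ)) (exp ℂ))) := by
        ring
    _ = _ := by rw [hre]


theorem stmt3 (lam : ℂ) (hlam : lam ≠ 1) (r k : ℤ) (T H : ℕ → ℂ → ℂ)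
    (hT : ∀ x : ℂ, oneSubExpNeg * GF (fun n => T n x)
        = zpowS (feBase lam) (r) * polyLogC (k) * expX x)
    (hH : ∀ x : ℂ, GF (fun n => H n x) = zpowS (feBase lam) r * expX x) :
    ∀ (n : ℕ) (x : ℂ),
      T n x = ∑ m ∈ range (n + 1), (((m : ℂ) + 1) ^ k)⁻¹ *
        ∑ j ∈ range (m + 1), (-1 : ℂ) ^ j * (m.choose j : ℂ) * H n (x - j) := by
  intro n x
  set Z := zpowS (feBase lam) r with hZ
  set S := Z * expX x with hS
  -- coefficient of S * O^m in terms of H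
  have h5 : ∀ (n m : ℕ), coeff n (S * oneSubExpNeg ^ m)
      = (∑ j ∈ range (m + 1), (-1 : ℂ) ^ j * (m.choose j : ℂ) * H n (x - j))
          / n.factorial := by
    intro n m
    rw [hS, mulkey, map_sum, sum_div]
    refine sum_congr rfl fun j _ => ?_
    rw [coeff_C_mul, ← hH (x - (j : ℂ))]
    simp only [GF, coeff_mk]
    ring
  -- the candidate series B
  set B : PowerSeries ℂ :=
    mk fun n => ∑ m ∈ range (n + 1),
      (((m : ℂ) + 1) ^ k)⁻¹ * coeff n (S * oneSubExpNeg ^ m) with hB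
  have main : oneSubExpNeg * GF (fun n => T n x) = oneSubExpNeg * B := by
    rw [hT x]
    have hcomm : Z * polyLogC k * expX x = S * polyLogC k := by rw [hS]; ring
    rw [hcomm]
    ext N
    -- LHS
    have hL : coeff N (S * polyLogC k)
        = ∑ m ∈ Icc 1 N, coeff N (S * oneSubExpNeg ^ m) * ((m : ℂ) ^ k)⁻¹ := by
      rw [coeff_mul]
      have step : ∀ p ∈ antidiagonal N,
          coeff p.1 S * coeff p.2 (polyLogC k)
            = ∑ m ∈ Icc 1 N,
                coeff p.1 S * coeff p.2 (oneSubExpNeg ^ m) * ((m : ℂ) ^ k)⁻¹ := by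
        intro p hp
        have hp2 : p.2 ≤ N := by
          have := Finset.HasAntidiagonal.mem_antidiagonal.1 hp
          omega
        rw [polyLogC, coeff_mk, mul_sum]
        rw [Finset.sum_subset (Finset.Icc_subset_Icc_right hp2)]
        · exact sum_congr rfl fun m _ => by ring
        · intro m hm hm'
          have : p.2 < m := by
            simp only [mem_Icc] at hm hm'
            omega
          rw [coeff_osen_pow this, zero_mul, mul_zero]
      rw [Finset.sum_congr rfl step, Finset.sum_comm]
      refine sum_congr rfl fun m _ => ?_
      rw [coeff_mul, sum_mul]
    -- RHS
    have hR : coeff N (oneSubExpNeg * B)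
        = ∑ m ∈ range (N + 1),
            (((m : ℂ) + 1) ^ k)⁻¹ * coeff N (S * oneSubExpNeg ^ (m + 1)) := by
      rw [coeff_mul]
      have step : ∀ p ∈ antidiagonal N,
          coeff p.1 oneSubExpNeg * coeff p.2 B
            = ∑ m ∈ range (N + 1), (((m : ℂ) + 1) ^ k)⁻¹ *
                (coeff p.1 oneSubExpNeg * coeff p.2 (S * oneSubExpNeg ^ m)) := by
        intro p hp
        have hp2 : p.2 ≤ N := by
          have := Finset.HasAntidiagonal.mem_antidiagonal.1 hp
          omega
        rw [hB, coeff_mk, mul_sum]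
        rw [Finset.sum_subset (Finset.range_subset_range.2 (Nat.succ_le_succ hp2))]
        · exact sum_congr rfl fun m _ => by ring
        · intro m hm hm'
          have : p.2 < m := by
            simp only [mem_range] at hm hm'
            omega
          rw [coeff_mul_osen_pow S this, mul_zero, mul_zero]
      rw [Finset.sum_congr rfl step, Finset.sum_comm]
      refine sum_congr rfl fun m _ => ?_
      rw [← Finset.mul_sum, ← coeff_mul]
      congr 1
      rw [pow_succ]
      ring
    rw [hL, hR]
    -- reindex
    rw [← Finset.Ico_add_one_right_eq_Icc, Finset.sum_Ico_eq_sum_range]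
    rw [Finset.sum_range_succ (fun m => (((m : ℂ) + 1) ^ k)⁻¹ *
          coeff N (S * oneSubExpNeg ^ (m + 1)))]
    rw [coeff_mul_osen_pow S (Nat.lt_succ_self N), mul_zero, add_zero]
    simp only [Nat.add_sub_cancel]
    refine sum_congr rfl fun i _ => ?_
    push_cast
    ring
  have hGT : GF (fun n => T n x) = B := mul_left_cancel₀ osen_ne main
  have hco := congrArg (coeff n) hGT
  rw [GF, hB, coeff_mk, coeff_mk] at hco
  have hfac : (n.factorial : ℂ) ≠ 0 := Nat.cast_ne_zero.2 n.factorial_ne_zero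
  have : T n x / n.factorial
      = (∑ m ∈ range (n + 1), (((m : ℂ) + 1) ^ k)⁻¹ *
          ∑ j ∈ range (m + 1), (-1 : ℂ) ^ j * (m.choose j : ℂ) * H n (x - j))
        / n.factorial := by
    rw [hco, sum_div]
    refine sum_congr rfl fun m _ => ?_
    rw [h5 n m, mul_div_assoc]
  have h2 := congrArg (fun z => z * (n.factorial : ℂ)) this
  simpa [div_mul_cancel₀, hfac] using h2
end

section
/- For n ≥ 0 and s ≥ 0, T_n^{(r,k)}(x|λ) = Σ_{m=0}^{n} [C(n,m) Σ_{l=0}^{n-m} (C(n-m,l)/C(s+l,l)) S₂(l+s,s) T_{n-m-l}^{(r,k)}(λ)] 𝔹_m^{(s)}(x), where 𝔹_m^{(s)}(x) are Bernoulli polynomials of order s. -/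
open PowerSeries Finset

lemma GF_mul (f g : ℕ → ℂ) :
    GF f * GF g = GF (fun n => ∑ m ∈ range (n + 1), (n.choose m : ℂ) * f m * g (n - m)) := by
  ext n
  rw [PowerSeries.coeff_mul]
  simp only [GF, coeff_mk]
  rw [Finset.Nat.sum_antidiagonal_eq_sum_range_succ_mk, Finset.sum_div]
  refine Finset.sum_congr rfl fun m hm => ?_
  rw [Finset.mem_range, Nat.lt_succ_iff] at hm
  have hfact : ((n.choose m : ℕ) * m.factorial * (n - m).factorial : ℂ) = (n.factorial : ℂ) := by
    exact_mod_cast congrArg (fun t : ℕ => (t : ℂ)) (Nat.choose_mul_factorial_mul_factorial hm)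
  have h1 : (m.factorial : ℂ) ≠ 0 := Nat.cast_ne_zero.mpr (Nat.factorial_ne_zero m)
  have h2 : ((n - m).factorial : ℂ) ≠ 0 := Nat.cast_ne_zero.mpr (Nat.factorial_ne_zero _)
  have h3 : (n.factorial : ℂ) ≠ 0 := Nat.cast_ne_zero.mpr (Nat.factorial_ne_zero n)
  field_simp
  rw [← hfact]
  ring

lemma GF_coeff (f : ℕ → ℂ) (n : ℕ) : coeff n (GF f) = f n / n.factorial := coeff_mk n _

lemma expm1_ne : (exp ℂ - 1 : PowerSeries ℂ) ≠ 0 := by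
  intro h
  have := congrArg (coeff 1) h
  simp [coeff_exp] at this

lemma oneSubExpNeg_ne : (oneSubExpNeg : PowerSeries ℂ) ≠ 0 := by
  intro h
  have := congrArg (coeff 1) h
  simp [oneSubExpNeg, coeff_rescale, coeff_exp, coeff_one] at this

lemma expX_zero : expX 0 = 1 := by
  simp [expX, rescale_zero]

/-- key generating function identity for Stirling numbers -/
lemma key (s : ℕ) :
    GF (fun l => S2 (l + s) s / (((s + l).choose l : ℕ) : ℂ)) * X ^ s
      = (exp ℂ - 1 : PowerSeries ℂ) ^ s := by
  obtain ⟨h, hh⟩ : (X : PowerSeries ℂ) ∣ (exp ℂ - 1) := by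
    rw [X_dvd_iff]
    simp [PowerSeries.exp]
  have hpow : (exp ℂ - 1 : PowerSeries ℂ) ^ s = X ^ s * h ^ s := by
    rw [hh, mul_pow]
  have hc : ∀ l : ℕ, coeff l (GF (fun l => S2 (l + s) s / (((s + l).choose l : ℕ) : ℂ)))
      = coeff (l + s) ((exp ℂ - 1) ^ s) := by
    intro l
    rw [GF_coeff, S2]
    have hfact : (((s + l).choose l : ℕ) * l.factorial * s.factorial : ℂ)
        = ((s + l).factorial : ℂ) := by
      have := Nat.choose_mul_factorial_mul_factorial (Nat.le_add_left l s)
      rw [Nat.add_sub_cancel] at this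
      exact_mod_cast congrArg (fun t : ℕ => (t : ℂ)) this
    have h1 : (l.factorial : ℂ) ≠ 0 := Nat.cast_ne_zero.mpr (Nat.factorial_ne_zero l)
    have h2 : (s.factorial : ℂ) ≠ 0 := Nat.cast_ne_zero.mpr (Nat.factorial_ne_zero s)
    have h3 : (((s + l).choose l : ℕ) : ℂ) ≠ 0 := by
      exact_mod_cast Nat.cast_ne_zero.mpr (Nat.choose_pos (Nat.le_add_left l s)).ne'
    have h4 : ((l + s).factorial : ℂ) ≠ 0 := Nat.cast_ne_zero.mpr (Nat.factorial_ne_zero _)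
    rw [show l + s = s + l from Nat.add_comm l s] at *
    field_simp
    rw [← hfact]
    ring
  ext n
  rcases le_or_gt s n with hs | hs
  · obtain ⟨d, rfl⟩ : ∃ d, n = d + s := ⟨n - s, (Nat.sub_add_cancel hs).symm⟩
    rw [mul_comm _ ((X : PowerSeries ℂ) ^ s), coeff_X_pow_mul, hc]
  · have hz : ∀ p : PowerSeries ℂ, coeff n ((X : PowerSeries ℂ) ^ s * p) = 0 := by
      intro p
      rw [PowerSeries.coeff_mul]
      apply Finset.sum_eq_zero
      rintro ⟨i, j⟩ hij
      rw [Finset.HasAntidiagonal.mem_antidiagonal] at hij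
      have : i ≠ s := by omega
      simp [coeff_X_pow, this]
    rw [mul_comm, hpow, hz, hz]

theorem stmt10 (lam : ℂ) (hlam : lam ≠ 1) (r k : ℤ) (s : ℕ) (T Bb : ℕ → ℂ → ℂ)
    (hT : ∀ x : ℂ, oneSubExpNeg * GF (fun n => T n x)
        = zpowS (feBase lam) (r) * polyLogC (k) * expX x)
    (hBb : ∀ x : ℂ, (exp ℂ - 1) ^ s * GF (fun n => Bb n x) = (X : PowerSeries ℂ) ^ s * expX x) :
    ∀ (n : ℕ) (x : ℂ),
      T n x = ∑ m ∈ range (n + 1),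
        ((n.choose m : ℂ) * ∑ l ∈ range (n - m + 1),
          ((n - m).choose l : ℂ) / ((s + l).choose l : ℂ) * S2 (l + s) s * T (n - m - l) 0) *
        Bb m x := by
  intro n x
  set g : ℕ → ℂ := fun l => S2 (l + s) s / (((s + l).choose l : ℕ) : ℂ) with hg
  -- step 1 : GF (T · x) = GF (T · 0) * expX x
  have hTx : GF (fun n => T n x) = GF (fun n => T n 0) * expX x := by
    apply mul_left_cancel₀ oneSubExpNeg_ne
    rw [hT x, ← mul_assoc, hT 0, expX_zero, mul_one]
  -- step 2 : main power series identity
  have hmain : GF (fun n => T n x) = GF g * GF (fun n => T n 0) * GF (fun n => Bb n x) := by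
    apply mul_left_cancel₀ (pow_ne_zero s expm1_ne)
    calc (exp ℂ - 1 : PowerSeries ℂ) ^ s * GF (fun n => T n x)
        = GF g * GF (fun n => T n 0) * ((exp ℂ - 1) ^ s * GF (fun n => Bb n x)) := by
          rw [hBb x, hTx, ← key s]; ring
      _ = (exp ℂ - 1) ^ s * (GF g * GF (fun n => T n 0) * GF (fun n => Bb n x)) := by ring
  -- step 3 : extract coefficients
  rw [GF_mul, mul_comm, GF_mul] at hmain
  have hcoeff := congrArg (coeff n) hmain
  rw [GF_coeff, GF_coeff] at hcoeff
  have h3 : (n.factorial : ℂ) ≠ 0 := Nat.cast_ne_zero.mpr (Nat.factorial_ne_zero n)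
  have heq : T n x = ∑ m ∈ range (n + 1),
      (n.choose m : ℂ) * Bb m x *
        (∑ l ∈ range (n - m + 1), ((n - m).choose l : ℂ) * g l * T (n - m - l) 0) := by
    have := congrArg (fun z : ℂ => z * n.factorial) hcoeff
    simpa [div_mul_cancel₀, h3] using this
  rw [heq]
  refine Finset.sum_congr rfl fun m _ => ?_
  rw [Finset.mul_sum, Finset.mul_sum, Finset.sum_mul]
  refine Finset.sum_congr rfl fun l _ => ?_
  simp only [hg]
  push_cast
  ring
end

section
/- For n ≥ 0 and s ≥ 0, T_n^{(r,k)}(x|λ) = (1/2^s) Σ_{m=0}^{n} [C(n,m) Σ_{j=0}^{s} C(s,j) T_{n-m}^{(r,k)}(j|λ)] E_m^{(s)}(x), where E_m^{(s)}(x) are Euler polynomials of order s. -/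
open PowerSeries Finset

theorem stmt11 (lam : ℂ) (hlam : lam ≠ 1) (r k : ℤ) (s : ℕ) (T E : ℕ → ℂ → ℂ)
    (hT : ∀ x : ℂ, oneSubExpNeg * GF (fun n => T n x)
        = zpowS (feBase lam) (r) * polyLogC (k) * expX x)
    (hE : ∀ x : ℂ, (exp ℂ + 1) ^ s * GF (fun n => E n x) = (2 : PowerSeries ℂ) ^ s * expX x) :
    ∀ (n : ℕ) (x : ℂ),
      T n x = (1 / 2 ^ s) * ∑ m ∈ range (n + 1),
        ((n.choose m : ℂ) * ∑ j ∈ range (s + 1), (s.choose j : ℂ) * T (n - m) j) * E m x := by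
  intro n x
  -- abbreviations
  set P : PowerSeries ℂ := zpowS (feBase lam) r * polyLogC k with hP
  set c : ℕ → ℂ := fun q => ∑ j ∈ range (s + 1), (s.choose j : ℂ) * T q j with hc
  -- oneSubExpNeg ≠ 0
  have hone : oneSubExpNeg ≠ 0 := by
    intro h
    have : (coeff 1) oneSubExpNeg = 0 := by rw [h]; simp
    rw [oneSubExpNeg] at this
    simp [coeff_rescale, coeff_exp] at this
  -- expX of a natural number is exp^j
  have hexpX : ∀ j : ℕ, expX (j : ℂ) = exp ℂ ^ j := fun j => by
    rw [expX, exp_pow_eq_rescale_exp]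
  -- GF of c is the binomial sum of GF's
  have hGFc : GF c = ∑ j ∈ range (s + 1), C (s.choose j : ℂ) * GF (fun q => T q (j : ℂ)) := by
    ext q
    simp only [GF, coeff_mk, map_sum, coeff_C_mul, hc]
    rw [Finset.sum_div]
    exact Finset.sum_congr rfl fun j _ => by ring
  -- key power-series identity
  have hmain : (2 : PowerSeries ℂ) ^ s * GF (fun q => T q x) = GF c * GF (fun m => E m x) := by
    apply mul_left_cancel₀ hone
    calc oneSubExpNeg * ((2 : PowerSeries ℂ) ^ s * GF (fun q => T q x))
        = (2 : PowerSeries ℂ) ^ s * (oneSubExpNeg * GF (fun q => T q x)) := by ring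
      _ = (2 : PowerSeries ℂ) ^ s * (P * expX x) := by rw [hT x]
      _ = P * ((2 : PowerSeries ℂ) ^ s * expX x) := by ring
      _ = P * ((exp ℂ + 1) ^ s * GF (fun m => E m x)) := by rw [hE x]
      _ = (P * (exp ℂ + 1) ^ s) * GF (fun m => E m x) := by ring
      _ = (oneSubExpNeg * GF c) * GF (fun m => E m x) := by
          congr 1
          rw [hGFc, Finset.mul_sum]
          have hb : (exp ℂ + 1) ^ s = ∑ j ∈ range (s + 1), exp ℂ ^ j * C (s.choose j : ℂ) := by
            rw [add_pow]
            refine Finset.sum_congr rfl fun j _ => ?_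
            rw [one_pow, mul_one, ← map_natCast (C) (s.choose j)]
          rw [hb, Finset.mul_sum]
          refine Finset.sum_congr rfl fun j _ => ?_
          have := hT (j : ℂ)
          calc P * (exp ℂ ^ j * C (s.choose j : ℂ))
              = C (s.choose j : ℂ) * (P * expX (j : ℂ)) := by rw [hexpX]; ring
            _ = C (s.choose j : ℂ) * (oneSubExpNeg * GF (fun q => T q (j : ℂ))) := by rw [this]
            _ = oneSubExpNeg * (C (s.choose j : ℂ) * GF (fun q => T q (j : ℂ))) := by ring
      _ = oneSubExpNeg * (GF c * GF (fun m => E m x)) := by ring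
  -- extract coefficient n
  have hcoeff := congrArg (coeff n) hmain
  have h2 : ((2 : PowerSeries ℂ) ^ s) = C ((2 : ℂ) ^ s) := by
    rw [map_pow, map_ofNat]
  rw [h2, coeff_C_mul, coeff_mul] at hcoeff
  rw [Finset.Nat.sum_antidiagonal_eq_sum_range_succ
    (fun a b => (coeff a) (GF c) * (coeff b) (GF fun m => E m x)) n] at hcoeff
  simp only [GF, coeff_mk] at hcoeff
  -- now pure field arithmetic
  have hfact : ((n.factorial : ℂ)) ≠ 0 := Nat.cast_ne_zero.mpr n.factorial_ne_zero
  have h2s : ((2 : ℂ) ^ s) ≠ 0 := pow_ne_zero s two_ne_zero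
  have key : (2 : ℂ) ^ s * T n x
      = ∑ m ∈ range (n + 1), (n.choose m : ℂ) * c (n - m) * E m x := by
    have := congrArg (fun z => (n.factorial : ℂ) * z) hcoeff
    beta_reduce at this
    rw [Finset.mul_sum] at this
    have hr : ∀ m ∈ range (n + 1),
        (n.factorial : ℂ) * (c m / m.factorial * (E (n - m) x / (n - m).factorial))
          = (n.choose (n - m) : ℂ) * c (n - (n - m)) * E (n - m) x := by
      intro m hm
      have hmn : m ≤ n := Nat.lt_succ_iff.mp (Finset.mem_range.mp hm)
      have h1 : n - (n - m) = m := Nat.sub_sub_self hmn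
      have hch : (n.choose (n - m) : ℂ)
          = (n.factorial : ℂ) / ((n - m).factorial * (n - (n - m)).factorial) := by
        rw [Nat.cast_choose ℂ (Nat.sub_le n m)]
      rw [hch, h1]
      have hmf : ((m.factorial : ℂ)) ≠ 0 := Nat.cast_ne_zero.mpr m.factorial_ne_zero
      have hnmf : (((n - m).factorial : ℂ)) ≠ 0 := Nat.cast_ne_zero.mpr (n - m).factorial_ne_zero
      field_simp
    rw [Finset.sum_congr rfl hr] at this
    rw [← Finset.sum_range_reflect (fun m => (n.choose (n - m) : ℂ) * c (n - (n - m)) * E (n - m) x) (n+1)] at this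
    have hsimpl : ∀ m ∈ range (n + 1),
        (n.choose (n - (n + 1 - 1 - m)) : ℂ) * c (n - (n - (n + 1 - 1 - m))) * E (n - (n + 1 - 1 - m)) x
          = (n.choose m : ℂ) * c (n - m) * E m x := by
      intro m hm
      have hmn : m ≤ n := Nat.lt_succ_iff.mp (Finset.mem_range.mp hm)
      have e1 : n + 1 - 1 - m = n - m := by omega
      have e2 : n - (n - m) = m := Nat.sub_sub_self hmn
      rw [e1, e2]
    rw [Finset.sum_congr rfl hsimpl] at this
    calc (2 : ℂ) ^ s * T n x
        = (n.factorial : ℂ) * ((2 : ℂ) ^ s * (T n x / n.factorial)) := by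
          field_simp
      _ = _ := this
  have hTn : T n x = (1 / 2 ^ s) * ((2 : ℂ) ^ s * T n x) := by field_simp
  rw [hTn, key]
end

section
/- For n ≥ 0, T_n^{(r,k)}(x|λ) = Σ_{m=0}^{n} [Σ_{l=0}^{n-m} C(n,l+m) S₂(l+m,m) T_{n-m-l}^{(r,k)}(λ)] (x)_m, where (x)_m = x(x-1)···(x-m+1) is the falling factorial. -/
open PowerSeries Finset

/-- combinatorial Stirling numbers of the second kind -/
noncomputable def st : ℕ → ℕ → ℂ
  | 0, 0 => 1
  | 0, _ + 1 => 0
  | _ + 1, 0 => 0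
  | n + 1, m + 1 => (m + 1 : ℂ) * st n (m + 1) + st n m

lemma st_zero_right : ∀ n, st n 0 = if n = 0 then 1 else 0
  | 0 => rfl
  | _ + 1 => rfl

lemma st_eq_zero : ∀ n m, n < m → st n m = 0
  | 0, m + 1, _ => rfl
  | n + 1, m + 1, h => by
      rw [st, st_eq_zero n (m + 1) (by omega), st_eq_zero n m (by omega)]
      ring

lemma derivative_exp : d⁄dX ℂ (exp ℂ) = exp ℂ := by
  ext n
  rw [PowerSeries.coeff_derivative, coeff_exp, coeff_exp]
  have h1 : ((n + 1).factorial : ℚ) ≠ 0 := by positivity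
  have h2 : ((n).factorial : ℚ) ≠ 0 := by positivity
  rw [show ((n : ℂ) + 1) = algebraMap ℚ ℂ ((n : ℚ) + 1) by push_cast; ring,
    ← map_mul]
  congr 1
  field_simp [Nat.factorial_succ]
  rw [Nat.factorial_succ]; push_cast; ring

lemma crec (n m : ℕ) :
    ((n : ℂ) + 1) * coeff (n + 1) ((exp ℂ - 1) ^ (m + 1))
      = ((m : ℂ) + 1) * (coeff n ((exp ℂ - 1) ^ (m + 1)) + coeff n ((exp ℂ - 1) ^ m)) := by
  have hD : d⁄dX ℂ ((exp ℂ - 1) ^ (m + 1))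
      = (m + 1 : ℕ) • ((exp ℂ - 1) ^ m • d⁄dX ℂ (exp ℂ - 1)) := by
    simpa using Derivation.leibniz_pow (d⁄dX ℂ) (a := exp ℂ - 1) (m + 1)
  have hde : d⁄dX ℂ (exp ℂ - 1) = exp ℂ := by
    rw [map_sub, _root_.derivative_exp]; simp
  rw [hde] at hD
  have hsplit : (exp ℂ - 1) ^ m • exp ℂ
      = (exp ℂ - 1) ^ (m + 1) + (exp ℂ - 1) ^ m := by
    rw [smul_eq_mul, pow_succ]
    ring
  rw [hsplit] at hD
  have := congrArg (coeff n) hD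
  rw [PowerSeries.coeff_derivative, map_nsmul, map_add, nsmul_eq_mul] at this
  push_cast at this
  rw [mul_comm ((n : ℂ) + 1)]
  exact this

lemma cst : ∀ n m, coeff n ((exp ℂ - 1) ^ m)
    = (m.factorial : ℂ) / (n.factorial : ℂ) * st n m := by
  intro n
  induction n with
  | zero =>
    intro m
    rw [coeff_zero_eq_constantCoeff, map_pow]
    have : constantCoeff (exp ℂ - 1) = 0 := by simp
    rw [this]
    cases m with
    | zero => simp [st]
    | succ m => simp [st, Nat.factorial]
  | succ n ih =>
    intro m
    cases m with
    | zero => simp [st_zero_right, Nat.factorial_succ]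
    | succ m =>
      have hn1 : ((n : ℂ) + 1) ≠ 0 := Nat.cast_add_one_ne_zero n
      have hnf : ((n.factorial : ℂ)) ≠ 0 := Nat.cast_ne_zero.mpr n.factorial_ne_zero
      have hmf : ((m.factorial : ℂ)) ≠ 0 := Nat.cast_ne_zero.mpr m.factorial_ne_zero
      have h := crec n m
      rw [ih (m + 1), ih m] at h
      have hc : coeff (n + 1) ((exp ℂ - 1) ^ (m + 1))
          = ((m : ℂ) + 1) * ((((m + 1).factorial : ℂ) / n.factorial * st n (m + 1))
            + ((m.factorial : ℂ) / n.factorial * st n m)) / ((n : ℂ) + 1) := by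
        rw [eq_div_iff hn1, mul_comm _ ((n : ℂ) + 1)]
        exact h
      rw [hc, st, Nat.factorial_succ m, Nat.factorial_succ n]
      push_cast
      field_simp

lemma S2_eq_st (n m : ℕ) : S2 n m = st n m := by
  have hnf : ((n.factorial : ℂ)) ≠ 0 := by
    exact_mod_cast Nat.cast_ne_zero.mpr n.factorial_ne_zero
  have hmf : ((m.factorial : ℂ)) ≠ 0 := by
    exact_mod_cast Nat.cast_ne_zero.mpr m.factorial_ne_zero
  rw [S2, cst]
  field_simp

lemma pow_eq_sum_st (n : ℕ) (x : ℂ) :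
    x ^ n = ∑ m ∈ range (n + 1), st n m * ∏ i ∈ range m, (x - i) := by
  induction n with
  | zero => simp [st]
  | succ n ih =>
    have hx : ∀ m : ℕ, x * ∏ i ∈ range m, (x - i)
        = (∏ i ∈ range (m + 1), (x - i)) + (m : ℂ) * ∏ i ∈ range m, (x - i) := by
      intro m
      rw [prod_range_succ]
      ring
    calc x ^ (n + 1) = x * x ^ n := by ring
      _ = ∑ m ∈ range (n + 1), st n m * (x * ∏ i ∈ range m, (x - i)) := by
          rw [ih, mul_sum]; apply sum_congr rfl; intros; ring
      _ = (∑ m ∈ range (n + 1), st n m * ∏ i ∈ range (m + 1), (x - i))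
            + ∑ m ∈ range (n + 1), (m : ℂ) * st n m * ∏ i ∈ range m, (x - i) := by
          rw [← sum_add_distrib]; apply sum_congr rfl; intro m _; rw [hx]; ring
      _ = ∑ m ∈ range (n + 2), st (n + 1) m * ∏ i ∈ range m, (x - i) := by
          rw [Finset.sum_range_succ' (fun m => st (n + 1) m * ∏ i ∈ range m, (x - i)) (n + 1)]
          have h2 : ∑ m ∈ range (n + 1), (m : ℂ) * st n m * ∏ i ∈ range m, (x - i)
              = ∑ m ∈ range (n + 1), ((m : ℂ) + 1) * st n (m + 1)
                  * ∏ i ∈ range (m + 1), (x - i) := by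
            rw [Finset.sum_range_succ' (fun m => (m : ℂ) * st n m * ∏ i ∈ range m, (x - i)) n,
              Finset.sum_range_succ (fun m => ((m : ℂ) + 1) * st n (m + 1)
                  * ∏ i ∈ range (m + 1), (x - i)) n]
            rw [st_eq_zero n (n + 1) (by omega)]
            push_cast
            ring
          rw [h2, ← sum_add_distrib]
          have h0 : st (n + 1) 0 = 0 := rfl
          rw [h0, zero_mul, add_zero]
          apply sum_congr rfl
          intro m _
          rw [st]
          push_cast
          ring

lemma algC (q : ℚ) : algebraMap ℚ ℂ q = (q : ℂ) := by
  simp [eq_ratCast]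

theorem stmt13 (lam : ℂ) (hlam : lam ≠ 1) (r k : ℤ) (T : ℕ → ℂ → ℂ)
    (hT : ∀ x : ℂ, oneSubExpNeg * GF (fun n => T n x)
        = zpowS (feBase lam) (r) * polyLogC (k) * expX x) :
    ∀ (n : ℕ) (x : ℂ),
      T n x = ∑ m ∈ range (n + 1),
        (∑ l ∈ range (n - m + 1), (n.choose (l + m) : ℂ) * S2 (l + m) m * T (n - m - l) 0) *
        ∏ i ∈ range m, (x - i) := by
  intro n x
  -- Step A : cancel oneSubExpNeg
  have hexp0 : expX 0 = 1 := by
    rw [expX, rescale_zero]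
    simp
  have hne : oneSubExpNeg ≠ 0 := by
    intro h
    have h1 := congrArg (coeff 1) h
    rw [oneSubExpNeg, map_sub, coeff_rescale, coeff_exp] at h1
    simp [algC] at h1
  have hF : zpowS (feBase lam) r * polyLogC k = oneSubExpNeg * GF (fun n => T n 0) := by
    have h0 := hT 0
    rw [hexp0, mul_one] at h0
    exact h0.symm
  have hGF : GF (fun n => T n x) = GF (fun n => T n 0) * expX x := by
    apply mul_left_cancel₀ hne
    rw [hT x, hF]
    ring
  -- Step B : coefficient extraction
  have hcoef : T n x = ∑ i ∈ range (n + 1), (n.choose i : ℂ) * T i 0 * x ^ (n - i) := by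
    have h := congrArg (coeff n) hGF
    rw [GF, GF, coeff_mk, coeff_mul, Finset.Nat.sum_antidiagonal_eq_sum_range_succ_mk] at h
    have hfn : ((n.factorial : ℂ)) ≠ 0 := Nat.cast_ne_zero.mpr n.factorial_ne_zero
    have : T n x = (n.factorial : ℂ) * (T n x / n.factorial) := by field_simp
    rw [this, h, mul_sum]
    apply sum_congr rfl
    intro i hi
    have hin : i ≤ n := mem_range_succ_iff.mp hi
    rw [coeff_mk, expX, coeff_rescale, coeff_exp, algC, Nat.cast_choose ℂ hin]
    have hfi : ((i.factorial : ℂ)) ≠ 0 := Nat.cast_ne_zero.mpr i.factorial_ne_zero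
    have hfni : (((n - i).factorial : ℂ)) ≠ 0 := Nat.cast_ne_zero.mpr (n - i).factorial_ne_zero
    push_cast
    field_simp
  -- reflect the sum
  have hcoef2 : T n x = ∑ p ∈ range (n + 1), (n.choose p : ℂ) * T (n - p) 0 * x ^ p := by
    rw [hcoef, ← Finset.sum_range_reflect]
    apply sum_congr rfl
    intro p hp
    have hpn : p ≤ n := mem_range_succ_iff.mp hp
    rw [Nat.add_sub_cancel, Nat.choose_symm hpn, Nat.sub_sub_self hpn]
  -- Step C : expand x^p in falling factorials and swap sums
  calc T n x = ∑ p ∈ range (n + 1), ∑ m ∈ range (p + 1),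
        (n.choose p : ℂ) * T (n - p) 0 * (st p m * ∏ i ∈ range m, (x - i)) := by
        rw [hcoef2]
        apply sum_congr rfl
        intro p _
        rw [pow_eq_sum_st, mul_sum]
    _ = ∑ m ∈ range (n + 1), ∑ p ∈ Ico m (n + 1),
        (n.choose p : ℂ) * T (n - p) 0 * (st p m * ∏ i ∈ range m, (x - i)) := by
        apply Finset.sum_comm'
        intro p m
        simp only [mem_range, mem_Ico]
        omega
    _ = ∑ m ∈ range (n + 1),
        (∑ l ∈ range (n - m + 1), (n.choose (l + m) : ℂ) * S2 (l + m) m * T (n - m - l) 0) *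
        ∏ i ∈ range m, (x - i) := by
        apply sum_congr rfl
        intro m hm
        have hmn : m ≤ n := mem_range_succ_iff.mp hm
        rw [Finset.sum_Ico_eq_sum_range, sum_mul]
        rw [show n + 1 - m = n - m + 1 by omega]
        apply sum_congr rfl
        intro l hl
        rw [S2_eq_st, show m + l = l + m by omega, show n - (l + m) = n - m - l by omega]
        ring
end

section
/- The formal power series (Li_k(1-e^{-t}) - Li_{k-1}(1-e^{-t}))/(1-e^{-t}) has zero constant term, i.e., it is divisible by t as a formal power series, with linear coefficient 1/2^k - 1/2^{k-1}. -/
open PowerSeries Finset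

theorem stmt17 (k : ℤ) :
    ∃ g : PowerSeries ℂ,
      oneSubExpNeg * g = polyLogC k - polyLogC (k - 1) ∧
      coeff 0 g = 0 ∧
      coeff 1 g = ((2 : ℂ) ^ k)⁻¹ - ((2 : ℂ) ^ (k - 1))⁻¹ := by
  have hc0 : constantCoeff oneSubExpNeg = 0 := by
    simp [oneSubExpNeg, ← coeff_zero_eq_constantCoeff, coeff_rescale]
  obtain ⟨u, hu⟩ : (X : PowerSeries ℂ) ∣ oneSubExpNeg := X_dvd_iff.mpr hc0
  have hu0 : constantCoeff u = 1 := by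
    have h1 : coeff 1 oneSubExpNeg = 1 := by
      simp [oneSubExpNeg, coeff_rescale]
    have := congrArg (coeff 1) hu
    rw [show (1:ℕ) = 0 + 1 from rfl, coeff_succ_X_mul, coeff_zero_eq_constantCoeff] at this
    rw [← this, h1]
  -- D
  set D := polyLogC k - polyLogC (k-1) with hD
  have hcoeffD : ∀ n, coeff n D = ∑ m ∈ Finset.Icc 1 n,
      (coeff n (oneSubExpNeg ^ m)) * (((m : ℂ) ^ k)⁻¹ - ((m : ℂ) ^ (k-1))⁻¹) := by
    intro n
    simp only [hD, map_sub, polyLogC, coeff_mk, ← Finset.sum_sub_distrib, mul_sub]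
  obtain ⟨h, hDh⟩ : (X : PowerSeries ℂ)^2 ∣ D := by
    rw [X_pow_dvd_iff]
    intro m hm
    interval_cases m
    · simp [hcoeffD 0]
    · rw [hcoeffD 1]
      simp
  have huinv : u * u⁻¹ = 1 := PowerSeries.mul_inv_cancel u (by rw [hu0]; exact one_ne_zero)
  refine ⟨X * (h * u⁻¹), ?_, ?_, ?_⟩
  · rw [hu, hDh]
    calc X * u * (X * (h * u⁻¹)) = X^2 * h * (u * u⁻¹) := by ring
    _ = X^2 * h := by rw [huinv, mul_one]
  · simp
  · rw [show coeff 1 (X * (h * u⁻¹)) = coeff (0 + 1) (X * (h * u⁻¹)) from rfl, coeff_succ_X_mul, coeff_zero_eq_constantCoeff, map_mul,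
      constantCoeff_inv, hu0, inv_one, mul_one]
    have hh0 : constantCoeff h = coeff 2 D := by
      have := congrArg (coeff 2) hDh
      rw [show (2:ℕ) = 0 + 2 from rfl, coeff_X_pow_mul, coeff_zero_eq_constantCoeff] at this
      exact this.symm
    rw [hh0, hcoeffD 2]
    have hsq : coeff 2 (oneSubExpNeg ^ 2) = 1 := by
      rw [hu, mul_pow, show (2:ℕ) = 0 + 2 from rfl, coeff_X_pow_mul,
        coeff_zero_eq_constantCoeff, map_pow, hu0, one_pow]
    rw [show Finset.Icc 1 2 = {1, 2} from rfl]
    simp [hsq]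
end
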